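/- For any integers n, t, p ≥ 1, any subset S ⊆ [n], and any sequence 𝐛 ∈ (ℤ/pℤ)^n, one has |{(𝐢,𝐱) : 𝐢 ∈ S^t, 𝐱 ∈ (ℤ/pℤ)^t, ms(𝐢,𝐱) = 𝐛}| = Σ_{T : supp(𝐛) ⊆ T ⊆ S, |T| ≤ t} p^{t−|T|} · |{𝐢 ∈ T^t : range(𝐢) = T}| (the restriction |T| ≤ t is harmless since there is no 𝐢 ∈ T^t with range(𝐢) = T when |T| > t). -/

import Mathlib

/-- The modular signature of a pair of sequences `i ∈ [n]^t`, `x ∈ (ℤ/pℤ)^t`: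
its `q`-th coordinate is `∑_{r : i r = q} x r (mod p)`. -/
def ms {n t p : ℕ} (i : Fin t → Fin n) (x : Fin t → ZMod p) : Fin n → ZMod p :=
  fun q => ∑ r ∈ Finset.univ.filter (fun r => i r = q), x r

/-- The support of `b ∈ (ℤ/pℤ)^n`: the set of coordinates with nonzero entry. -/
def msupp {n p : ℕ} (b : Fin n → ZMod p) : Finset (Fin n) :=
  Finset.univ.filter (fun q => b q ≠ 0)

lemma ms_not_mem {n t p : ℕ} (i : Fin t → Fin n) (x : Fin t → ZMod p) (q : Fin n)
    (hq : q ∉ Finset.image i Finset.univ) : ms i x q = 0 := by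
  rw [ms]
  rw [Finset.filter_false_of_mem, Finset.sum_empty]
  intro r _ h
  exact hq (Finset.mem_image.mpr ⟨r, Finset.mem_univ r, h⟩)

lemma msupp_ms_subset {n t p : ℕ} (i : Fin t → Fin n) (x : Fin t → ZMod p) :
    msupp (ms i x) ⊆ Finset.image i Finset.univ := by
  intro q hq
  rw [msupp, Finset.mem_filter] at hq
  by_contra h
  exact hq.2 (ms_not_mem i x q h)

lemma ms_add {n t p : ℕ} (i : Fin t → Fin n) (x y : Fin t → ZMod p) :
    ms i (x + y) = ms i x + ms i y := by
  funext q
  simp [ms, Finset.sum_add_distrib]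

lemma ms_sub {n t p : ℕ} (i : Fin t → Fin n) (x y : Fin t → ZMod p) :
    ms i (x - y) = ms i x - ms i y := by
  funext q
  simp [ms, Finset.sum_sub_distrib]

lemma exists_solution {n t p : ℕ} (ht : 1 ≤ t) (i : Fin t → Fin n) (b : Fin n → ZMod p)
    (hb : msupp b ⊆ Finset.image i Finset.univ) : ∃ x, ms i x = b := by
  have : Nonempty (Fin t) := ⟨⟨0, ht⟩⟩
  refine ⟨fun r => if Function.invFun i (i r) = r then b (i r) else 0, ?_⟩
  funext q
  by_cases hq : q ∈ Finset.image i Finset.univ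
  · obtain ⟨r0, _, hr0⟩ := Finset.mem_image.mp hq
    have hinv : i (Function.invFun i q) = q := Function.invFun_eq ⟨r0, hr0⟩
    rw [ms]
    rw [Finset.sum_congr rfl (g := fun r => if Function.invFun i q = r then b q else 0)
      (fun r hr => by
        have : i r = q := (Finset.mem_filter.mp hr).2
        rw [this])]
    rw [Finset.sum_ite_eq]
    rw [if_pos]
    exact Finset.mem_filter.mpr ⟨Finset.mem_univ _, hinv⟩
  · have hbq : b q = 0 := by
      by_contra h
      exact hq (hb (Finset.mem_filter.mpr ⟨Finset.mem_univ _, h⟩))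
    rw [hbq]
    exact ms_not_mem i _ q hq

lemma card_supported {n p : ℕ} [NeZero p] (T : Finset (Fin n)) :
    (Finset.univ.filter fun b : Fin n → ZMod p => msupp b ⊆ T).card = p ^ T.card := by
  have : (Finset.univ.filter fun b : Fin n → ZMod p => msupp b ⊆ T)
      = Fintype.piFinset (fun q => if q ∈ T then (Finset.univ : Finset (ZMod p)) else {0}) := by
    ext b
    rw [Finset.mem_filter]
    simp only [Finset.mem_filter, Finset.mem_univ, true_and, Fintype.mem_piFinset, msupp]
    constructor
    · intro h q
      split_ifs with hq
      · exact Finset.mem_univ _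
      · simp only [Finset.mem_singleton]
        by_contra hb
        exact hq (h (Finset.mem_filter.mpr ⟨Finset.mem_univ _, hb⟩))
    · intro h q hq
      rw [Finset.mem_filter] at hq
      have := h q
      by_contra hqT
      rw [if_neg hqT, Finset.mem_singleton] at this
      exact hq.2 this
  rw [this, Fintype.card_piFinset]
  have : ∀ q : Fin n, ((if q ∈ T then (Finset.univ : Finset (ZMod p)) else {0}).card)
      = if q ∈ T then p else 1 := by
    intro q; split_ifs <;> simp [ZMod.card]
  rw [Finset.prod_congr rfl (fun q _ => this q)]
  rw [← Finset.prod_filter]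
  simp

lemma fiber_card_eq {n t p : ℕ} [NeZero p] (i : Fin t → Fin n) (xb xb' : Fin t → ZMod p)
    : (Finset.univ.filter fun x : Fin t → ZMod p => ms i x = ms i xb).card
      = (Finset.univ.filter fun x : Fin t → ZMod p => ms i x = ms i xb').card := by
  apply Finset.card_bij' (fun x _ => x + (xb' - xb)) (fun x _ => x - (xb' - xb))
  · intro x hx
    rw [Finset.mem_filter] at hx ⊢
    refine ⟨Finset.mem_univ _, ?_⟩
    rw [ms_add, hx.2, ms_sub]
    abel
  · intro x hx
    rw [Finset.mem_filter] at hx ⊢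
    refine ⟨Finset.mem_univ _, ?_⟩
    rw [ms_sub, hx.2, ms_sub]
    abel
  · intro x _; abel
  · intro x _; abel

lemma fiber_card {n t p : ℕ} [NeZero p] (ht : 1 ≤ t) (i : Fin t → Fin n) (b : Fin n → ZMod p)
    (hb : msupp b ⊆ Finset.image i Finset.univ) :
    (Finset.univ.filter fun x : Fin t → ZMod p => ms i x = b).card
      = p ^ (t - (Finset.image i Finset.univ).card) := by
  set T := Finset.image i Finset.univ with hT
  set N := (Finset.univ.filter fun x : Fin t → ZMod p => ms i x = b).card with hN
  have hTt : T.card ≤ t := le_trans (Finset.card_image_le) (by simp)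
  obtain ⟨xb, hxb⟩ := exists_solution ht i b hb
  have key : p ^ T.card * N = p ^ t := by
    have h1 : (Finset.univ : Finset (Fin t → ZMod p)).card
        = ∑ b' ∈ Finset.univ.filter (fun b' : Fin n → ZMod p => msupp b' ⊆ T),
            (Finset.univ.filter fun x : Fin t → ZMod p => ms i x = b').card := by
      apply Finset.card_eq_sum_card_fiberwise
      intro x _
      exact Finset.mem_filter.mpr ⟨Finset.mem_univ _, msupp_ms_subset i x⟩
    have h2 : ∀ b' ∈ Finset.univ.filter (fun b' : Fin n → ZMod p => msupp b' ⊆ T),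
        (Finset.univ.filter fun x : Fin t → ZMod p => ms i x = b').card = N := by
      intro b' hb'
      obtain ⟨xb', hxb'⟩ := exists_solution ht i b' (Finset.mem_filter.mp hb').2
      rw [hN, ← hxb, ← hxb']
      exact fiber_card_eq i xb' xb
    rw [Finset.sum_congr rfl h2, Finset.sum_const, smul_eq_mul, card_supported] at h1
    rw [← h1]
    simp [Fintype.card_fun, ZMod.card]
  have hppos : 0 < p ^ T.card := pow_pos (NeZero.pos p) _
  have : p ^ T.card * N = p ^ T.card * p ^ (t - T.card) := by
    rw [key, ← pow_add]
    congr 1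
    omega
  exact Nat.eq_of_mul_eq_mul_left hppos this

lemma card_filter_prod {α β : Type*} [Fintype α] [Fintype β] (C : α → β → Prop)
    [∀ i x, Decidable (C i x)] :
    (Finset.univ.filter fun ix : α × β => C ix.1 ix.2).card
    = ∑ i : α, (Finset.univ.filter fun x => C i x).card := by
  rw [Finset.card_filter, ← Finset.univ_product_univ, Finset.sum_product]
  exact Finset.sum_congr rfl fun i _ => (Finset.card_filter _ _).symm


/-- `|{(𝐢,𝐱) : 𝐢 ∈ S^t, ms(𝐢,𝐱) = 𝐛}|
  = ∑_{supp(𝐛) ⊆ T ⊆ S, |T| ≤ t} p^{t−|T|} · |{𝐢 ∈ T^t : range(𝐢) = T}|`. -/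
theorem count_ms_subsets (n t p : ℕ) [NeZero p] (hn : 1 ≤ n) (ht : 1 ≤ t) (hp : 1 ≤ p)
    (S : Finset (Fin n)) (b : Fin n → ZMod p) :
    (Finset.univ.filter (fun ix : (Fin t → Fin n) × (Fin t → ZMod p) =>
        (∀ r, ix.1 r ∈ S) ∧ ms ix.1 ix.2 = b)).card
    = ∑ T ∈ S.powerset.filter (fun T => msupp b ⊆ T ∧ T.card ≤ t),
        p ^ (t - T.card) *
          (Finset.univ.filter (fun i : Fin t → Fin n =>
            (∀ r, i r ∈ T) ∧ Finset.image i Finset.univ = T)).card := by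
  rw [Finset.card_eq_sum_card_fiberwise
    (f := fun ix : (Fin t → Fin n) × (Fin t → ZMod p) => Finset.image ix.1 Finset.univ)
    (t := S.powerset.filter (fun T => msupp b ⊆ T ∧ T.card ≤ t)) ?H]
  case H =>
    intro ix hix
    rw [Finset.mem_coe] at ⊢; rw [Finset.mem_coe, Finset.mem_filter] at hix
    obtain ⟨-, hS, hms⟩ := hix
    refine Finset.mem_filter.mpr ⟨Finset.mem_powerset.mpr ?_, ?_, ?_⟩
    · intro q hq
      obtain ⟨r, -, hr⟩ := Finset.mem_image.mp hq
      exact hr ▸ hS r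
    · rw [← hms]; exact msupp_ms_subset ix.1 ix.2
    · exact le_trans Finset.card_image_le (by simp)
  refine Finset.sum_congr rfl fun T hT => ?_
  rw [Finset.mem_filter, Finset.mem_powerset] at hT
  obtain ⟨hTS, hbT, hTt⟩ := hT
  rw [Finset.filter_filter]
  have hpred : Finset.univ.filter (fun ix : (Fin t → Fin n) × (Fin t → ZMod p) =>
        ((∀ r, ix.1 r ∈ S) ∧ ms ix.1 ix.2 = b) ∧ Finset.image ix.1 Finset.univ = T)
      = Finset.univ.filter (fun ix : (Fin t → Fin n) × (Fin t → ZMod p) =>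
        Finset.image ix.1 Finset.univ = T ∧ ms ix.1 ix.2 = b) := by
    apply Finset.filter_congr
    intro ix _
    constructor
    · rintro ⟨⟨-, h2⟩, h3⟩; exact ⟨h3, h2⟩
    · rintro ⟨h1, h2⟩
      refine ⟨⟨fun r => hTS (h1 ▸ Finset.mem_image.mpr ⟨r, Finset.mem_univ r, rfl⟩), h2⟩, h1⟩
  rw [hpred, card_filter_prod (fun i x => Finset.image i Finset.univ = T ∧ ms i x = b)]
  have hterm : ∀ i : Fin t → Fin n,
      (Finset.univ.filter fun x : Fin t → ZMod p =>
        Finset.image i Finset.univ = T ∧ ms i x = b).card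
      = if Finset.image i Finset.univ = T then p ^ (t - T.card) else 0 := by
    intro i
    split_ifs with h
    · have hf := fiber_card ht i b (h ▸ hbT)
      rw [h] at hf
      rw [← hf]
      congr 1
      apply Finset.filter_congr
      intro x _
      simp [h]
    · rw [Finset.filter_false_of_mem, Finset.card_empty]
      intro x _ hx
      exact h hx.1
  rw [Finset.sum_congr rfl fun i _ => hterm i]
  rw [← Finset.sum_filter, Finset.sum_const, smul_eq_mul, mul_comm]
  congr 1
  apply congrArg
  apply Finset.filter_congr
  intro i _
  constructor
  · intro h
    exact ⟨fun r => h ▸ Finset.mem_image.mpr ⟨r, Finset.mem_univ r, rfl⟩, h⟩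
  · exact fun h => h.2
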